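/- If a p×p 0-1 matrix T realizes row sums x and column sums y, then τ_{kl} ≥ 0 for all 0 ≤ k,l ≤ p, where τ_{kl} = (p−k)(p−l) + Σ_{j=1}^l y_j − Σ_{i=k+1}^p x_i. -/

import Mathlib

open Finset

/-- If a p×p 0-1 matrix T realizes row sums x and column sums y,
then τ_{kl} ≥ 0 for all 0 ≤ k,l ≤ p. -/
theorem stmt_7 (p : ℕ) (T : ℕ → ℕ → ℕ) (x y : ℕ → ℕ)
    (h01 : ∀ i ∈ Finset.Icc 1 p, ∀ j ∈ Finset.Icc 1 p, T i j ≤ 1)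
    (hrow : ∀ i ∈ Finset.Icc 1 p, ∑ j ∈ Finset.Icc 1 p, T i j = x i)
    (hcol : ∀ j ∈ Finset.Icc 1 p, ∑ i ∈ Finset.Icc 1 p, T i j = y j)
    (k l : ℕ) (hk : k ≤ p) (hl : l ≤ p) :
    0 ≤ ((p : ℤ) - k) * ((p : ℤ) - l)
      + ∑ j ∈ Finset.Icc 1 l, (y j : ℤ)
      - ∑ i ∈ Finset.Icc (k+1) p, (x i : ℤ) := by
  have hsub : Finset.Icc (k+1) p ⊆ Finset.Icc 1 p := by
    apply Finset.Icc_subset_Icc _ le_rfl; omega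
  have hsubl : Finset.Icc 1 l ⊆ Finset.Icc 1 p := Finset.Icc_subset_Icc le_rfl hl
  have hsplit : ∀ i ∈ Finset.Icc (k+1) p,
      (x i : ℤ) = (∑ j ∈ Finset.Icc 1 l, (T i j : ℤ))
        + ∑ j ∈ Finset.Icc (l+1) p, (T i j : ℤ) := by
    intro i hi
    rw [← hrow i (hsub hi)]
    push_cast
    rw [← Finset.sum_union]
    · congr 1
      rw [Finset.Icc_add_one_left_eq_Ioc, show (1:ℕ) = 0 + 1 from rfl, Finset.Icc_add_one_left_eq_Ioc, Finset.Icc_add_one_left_eq_Ioc]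
      exact (Finset.Ioc_union_Ioc_eq_Ioc (Nat.zero_le l) hl).symm
    · rw [Finset.disjoint_left]; intro a ha hb
      simp only [Finset.mem_Icc] at ha hb; omega
  rw [Finset.sum_congr rfl hsplit, Finset.sum_add_distrib]
  have h1 : ∑ i ∈ Finset.Icc (k+1) p, ∑ j ∈ Finset.Icc 1 l, (T i j : ℤ)
      ≤ ∑ j ∈ Finset.Icc 1 l, (y j : ℤ) := by
    rw [Finset.sum_comm]
    apply Finset.sum_le_sum
    intro j hj
    rw [← hcol j (hsubl hj)]
    push_cast
    apply Finset.sum_le_sum_of_subset_of_nonneg hsub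
    intro i _ _; positivity
  have h2 : ∑ i ∈ Finset.Icc (k+1) p, ∑ j ∈ Finset.Icc (l+1) p, (T i j : ℤ)
      ≤ ((p : ℤ) - k) * ((p : ℤ) - l) := by
    calc ∑ i ∈ Finset.Icc (k+1) p, ∑ j ∈ Finset.Icc (l+1) p, (T i j : ℤ)
        ≤ ∑ i ∈ Finset.Icc (k+1) p, ∑ _j ∈ Finset.Icc (l+1) p, (1 : ℤ) := by
          apply Finset.sum_le_sum; intro i hi
          apply Finset.sum_le_sum; intro j hj
          exact_mod_cast h01 i (hsub hi) j (Finset.Icc_subset_Icc (by omega) le_rfl hj)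
      _ = ((p : ℤ) - k) * ((p : ℤ) - l) := by
          simp [Nat.card_Icc]
          push_cast [Nat.cast_sub hk, Nat.cast_sub hl]
          ring
  linarith
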